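/- Let q be a real number with q > 0 and q ≠ 1. Then for all integers r ≥ 1, N ≥ 1 and k ≥ 0, Σ_{i=0}^{N−1} q^{i·r} · [i]_k = (Σ_{ℓ=0}^{r−1} q^{(r−ℓ−1)·N + (ℓ+1)·k} · [r−1]_ℓ / [k+r]_{ℓ+1}) · [N]_{k+1}. -/

import Mathlib

open Finset

noncomputable def qb (q x : ℝ) : ℝ := (q ^ x - 1) / (q - 1)
noncomputable def qff (q x : ℝ) (m : ℕ) : ℝ := ∏ j ∈ range m, qb q (x - j)

noncomputable def Dd (q : ℝ) (r k l : ℕ) : ℝ :=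
  q ^ ((l + 1) * k) * qff q ((r : ℝ) - 1) l / qff q ((k : ℝ) + r) (l + 1)

noncomputable def Ee (q : ℝ) (r k N l : ℕ) : ℝ :=
  q ^ ((r - l) * N) * (q ^ (k + (r - l)) - 1) * Dd q r k l

section
variable {q : ℝ} (hq : 0 < q) (hq1 : q ≠ 1)

lemma qb_zero : qb q 0 = 0 := by simp [qb]

lemma qff_zero (q x : ℝ) : qff q x 0 = 1 := by simp [qff]

lemma qff_one (q x : ℝ) : qff q x 1 = qb q x := by simp [qff]

include hq hq1 in
lemma rpow_ne_one' {x : ℝ} (hx : 0 < x) : q ^ x ≠ 1 := by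
  rcases lt_or_gt_of_ne hq1 with h | h
  · exact ne_of_lt (Real.rpow_lt_one hq.le h hx)
  · exact ne_of_gt ((Real.one_lt_rpow_iff_of_pos hq).2 (Or.inl ⟨h, hx⟩))

include hq hq1 in
lemma qb_ne {x : ℝ} (hx : 0 < x) : qb q x ≠ 0 :=
  div_ne_zero (sub_ne_zero.2 (rpow_ne_one' hq hq1 hx)) (sub_ne_zero.2 hq1)

include hq hq1 in
lemma npow_ne_one {n : ℕ} (hn : 1 ≤ n) : q ^ n ≠ 1 := by
  have := rpow_ne_one' hq hq1 (x := (n : ℝ)) (by exact_mod_cast hn)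
  rwa [Real.rpow_natCast] at this

lemma qb_nat (n : ℕ) : qb q (n : ℝ) = (q ^ n - 1) / (q - 1) := by
  rw [qb, Real.rpow_natCast]

lemma qff_succ (q x : ℝ) (m : ℕ) : qff q x (m + 1) = qff q x m * qb q (x - m) :=
  prod_range_succ _ _

lemma qff_succ_left (q x : ℝ) (m : ℕ) : qff q x (m + 1) = qb q x * qff q (x - 1) m := by
  rw [qff, prod_range_succ']
  simp only [Nat.cast_add, Nat.cast_one, Nat.cast_zero, sub_zero]
  rw [mul_comm, qff]
  congr 1
  exact Finset.prod_congr rfl fun j _ => by ring_nf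

include hq hq1 in
lemma qff_nat_ne {n m : ℕ} (h : m ≤ n) : qff q (n : ℝ) m ≠ 0 := by
  rw [qff, Finset.prod_ne_zero_iff]
  intro j hj
  refine qb_ne hq hq1 ?_
  have hj' : j < m := mem_range.1 hj
  have : (j : ℝ) < n := by exact_mod_cast lt_of_lt_of_le hj' h
  linarith

lemma qff_nat_zero {n m : ℕ} (h : n < m) : qff q (n : ℝ) m = 0 := by
  rw [qff]
  refine Finset.prod_eq_zero (mem_range.2 h) ?_
  rw [sub_self, qb_zero]

include hq hq1 in
lemma key (r k l : ℕ) (hl : l < r) :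
    q ^ k * (q ^ (r - l - 1) - 1) * Dd q r k l
      = (q ^ (k + (r - l - 1)) - 1) * Dd q r k (l + 1) := by
  rcases eq_or_lt_of_le (Nat.succ_le_of_lt hl) with he | hlt
  · have h1 : r - l - 1 = 0 := by omega
    have h2 : ((r : ℝ) - 1) = ((l : ℕ) : ℝ) := by
      have : r = l + 1 := he.symm
      subst this; push_cast; ring
    rw [h1, pow_zero, sub_self, mul_zero, zero_mul]
    rw [Dd, h2, qff_nat_zero (by omega), mul_zero, zero_div, mul_zero]
  · have hcast : ((r - l - 1 : ℕ) : ℝ) = (r : ℝ) - l - 1 := by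
      have h : (r - l - 1) + l + 1 = r := by omega
      have := congrArg (fun n : ℕ => (n : ℝ)) h
      push_cast at this; linarith
    have e1 : qb q ((r : ℝ) - 1 - (l : ℕ)) = (q ^ (r - l - 1) - 1) / (q - 1) := by
      rw [show (r : ℝ) - 1 - (l : ℕ) = ((r - l - 1 : ℕ) : ℝ) by rw [hcast]; ring, qb_nat]
    have e2 : qb q ((k : ℝ) + r - ((l + 1 : ℕ) : ℝ)) = (q ^ (k + (r - l - 1)) - 1) / (q - 1) := by
      rw [show (k : ℝ) + r - ((l + 1 : ℕ) : ℝ) = ((k + (r - l - 1) : ℕ) : ℝ) by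
        push_cast; rw [hcast]; ring, qb_nat]
    have hG : qff q ((k : ℝ) + r) (l + 1) ≠ 0 := by
      rw [show (k : ℝ) + r = ((k + r : ℕ) : ℝ) by push_cast; ring]
      exact qff_nat_ne hq hq1 (by omega)
    have hb : q ^ (k + (r - l - 1)) - 1 ≠ 0 :=
      sub_ne_zero.2 (npow_ne_one hq hq1 (by omega))
    have hq1' : q - 1 ≠ 0 := sub_ne_zero.2 hq1
    rw [Dd, Dd, qff_succ q ((r : ℝ) - 1) l, qff_succ q ((k : ℝ) + r) (l + 1), e1, e2]
    field_simp
    ring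

include hq hq1 in
lemma term (r k N l : ℕ) (hl : l < r) :
    q ^ k * (q - 1) *
        (q ^ ((r - l - 1) * (N + 1)) * Dd q r k l * qb q ((N : ℝ) + 1)
          - q ^ ((r - l - 1) * N) * Dd q r k l * qb q ((N : ℝ) - k))
      = Ee q r k N l - Ee q r k N (l + 1) := by
  have hsub : r - (l + 1) = r - l - 1 := by omega
  have ha : r - l = (r - l - 1) + 1 := by omega
  have hb1 : qb q ((N : ℝ) + 1) = (q ^ (N + 1) - 1) / (q - 1) := by
    rw [show (N : ℝ) + 1 = ((N + 1 : ℕ) : ℝ) by push_cast; ring, qb_nat]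
  have hb2 : qb q ((N : ℝ) - (k : ℕ)) = (q ^ N / q ^ k - 1) / (q - 1) := by
    rw [qb, Real.rpow_sub hq, Real.rpow_natCast, Real.rpow_natCast]
  rw [Ee, Ee, hsub,
    mul_assoc (q ^ ((r - l - 1) * N)) (q ^ (k + (r - l - 1)) - 1) (Dd q r k (l + 1)),
    ← key hq hq1 r k l hl, hb1, hb2, ha]
  have hq0 : q ≠ 0 := ne_of_gt hq
  have hq1' : q - 1 ≠ 0 := sub_ne_zero.2 hq1
  field_simp
  simp only [Nat.add_sub_cancel, Nat.add_sub_cancel_left]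
  ring

include hq hq1 in
lemma qstar (r k N : ℕ) (hr : 1 ≤ r) :
    (∑ l ∈ range r, q ^ ((r - l - 1) * (N + 1)) * Dd q r k l) * qb q ((N : ℝ) + 1)
      - (∑ l ∈ range r, q ^ ((r - l - 1) * N) * Dd q r k l) * qb q ((N : ℝ) - k)
      = q ^ (N * r) := by
  have hc : q ^ k * (q - 1) ≠ 0 :=
    mul_ne_zero (pow_ne_zero _ (ne_of_gt hq)) (sub_ne_zero.2 hq1)
  apply mul_left_cancel₀ hc
  rw [sum_mul, sum_mul, ← Finset.sum_sub_distrib, Finset.mul_sum]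
  rw [Finset.sum_congr rfl fun l hl => term hq hq1 r k N l (mem_range.1 hl)]
  rw [Finset.sum_range_sub' (fun l => Ee q r k N l) r]
  have hEr : Ee q r k N r = 0 := by
    rw [Ee, Dd, show ((r : ℝ) - 1) = ((r - 1 : ℕ) : ℝ) by
        rw [Nat.cast_sub hr]; push_cast; ring,
      qff_nat_zero (by omega), mul_zero, zero_div, mul_zero]
  have hE0 : Ee q r k N 0 = q ^ (r * N) * q ^ k * (q - 1) / (q ^ (k + r) - 1) * (q ^ (k + r) - 1) := by
    rw [Ee, Dd, Nat.sub_zero, qff_zero, qff_one,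
      show (k : ℝ) + r = ((k + r : ℕ) : ℝ) by push_cast; ring, qb_nat]
    have hb : q ^ (k + r) - 1 ≠ 0 := sub_ne_zero.2 (npow_ne_one hq hq1 (by omega))
    have hq1' : q - 1 ≠ 0 := sub_ne_zero.2 hq1
    field_simp
    ring
  rw [hEr, hE0, sub_zero]
  have hb : q ^ (k + r) - 1 ≠ 0 := sub_ne_zero.2 (npow_ne_one hq hq1 (by omega))
  field_simp
  ring

end

theorem sum_of_q_falling_factorials (q : ℝ) (hq : 0 < q) (hq1 : q ≠ 1) :
    ∀ r N k : ℕ, 1 ≤ r → 1 ≤ N →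
      ∑ i ∈ range N, q ^ (i * r) * qff q (i : ℝ) k
        = (∑ l ∈ range r,
            q ^ ((r - l - 1) * N + (l + 1) * k) *
              qff q ((r : ℝ) - 1) l / qff q ((k : ℝ) + r) (l + 1))
          * qff q (N : ℝ) (k + 1) := by
  intro r N k hr hN
  induction N, hN using Nat.le_induction with
  | base =>
    rw [sum_range_one]
    cases k with
    | zero =>
      have hrne : q ^ r - 1 ≠ 0 := sub_ne_zero.2 (npow_ne_one hq hq1 hr)
      have hq1' : q - 1 ≠ 0 := sub_ne_zero.2 hq1
      have h11 : qff q ((1 : ℕ) : ℝ) (0 + 1) = 1 := by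
        rw [qff_one, Nat.cast_one, qb, Real.rpow_one]
        field_simp
      have hsum : (∑ l ∈ range r,
            q ^ ((r - l - 1) * 1 + (l + 1) * 0) *
              qff q ((r : ℝ) - 1) l / qff q (((0 : ℕ) : ℝ) + r) (l + 1))
          = ∑ l ∈ range r, q ^ (r - 1 - l) * ((q - 1) / (q ^ r - 1)) := by
        refine sum_congr rfl fun l hl => ?_
        have hlr := mem_range.1 hl
        have hF : qff q ((r : ℝ) - 1) l ≠ 0 := by
          rw [show (r : ℝ) - 1 = ((r - 1 : ℕ) : ℝ) by rw [Nat.cast_sub hr]; push_cast; ring]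
          exact qff_nat_ne hq hq1 (by omega)
        rw [show ((0 : ℕ) : ℝ) + (r : ℝ) = ((r : ℕ) : ℝ) by push_cast; ring]
        rw [qff_succ_left, qb_nat]
        rw [show (r - l - 1) * 1 + (l + 1) * 0 = r - 1 - l from by omega]
        field_simp
      rw [hsum, ← Finset.sum_mul, Finset.sum_range_reflect (fun i => q ^ i) r,
        geom_sum_eq hq1, h11, mul_one]
      rw [qff_zero]
      field_simp
      simp
    | succ k' =>
      rw [qff_nat_zero (n := 0) (by omega), qff_nat_zero (n := 1) (by omega),
        mul_zero, mul_zero]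
  | succ N hN ih =>
    rw [sum_range_succ, ih]
    have hrw : ∀ M : ℕ,
        (∑ l ∈ range r,
            q ^ ((r - l - 1) * M + (l + 1) * k) *
              qff q ((r : ℝ) - 1) l / qff q ((k : ℝ) + r) (l + 1))
          = ∑ l ∈ range r, q ^ ((r - l - 1) * M) * Dd q r k l := by
      intro M
      refine sum_congr rfl fun l _ => ?_
      rw [Dd, pow_add]
      ring
    have h1 : qff q (((N + 1 : ℕ)) : ℝ) (k + 1) = qb q ((N : ℝ) + 1) * qff q (N : ℝ) k := by
      rw [show (((N + 1 : ℕ)) : ℝ) = (N : ℝ) + 1 by push_cast; ring, qff_succ_left,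
        add_sub_cancel_right]
    have h2 : qff q (N : ℝ) (k + 1) = qff q (N : ℝ) k * qb q ((N : ℝ) - k) :=
      qff_succ q _ k
    rw [hrw N, hrw (N + 1), h1, h2]
    linear_combination (-(qff q (N : ℝ) k)) * qstar hq hq1 r k N hr
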